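/- Hypervertex replacement: Let s be a USO outmap on the n-hypercube, and let the face F = C_u^I be a hypervertex, i.e., all vertices of F have the same outmap values on coordinates outside I. Let s' be any USO outmap on F (viewed as an |I|-hypercube). Then the outmap s̃ agreeing with s outside F, and equal to s' on coordinates I and to s on coordinates [n]∖I for vertices of F, is a USO outmap. -/
import Mathlib


/-- `s` is the outmap of a unique sink orientation (Szabó–Welzl criterion). -/
def IsUSO {ι : Type*} (s : (ι → Bool) → (ι → Bool)) : Prop :=
  ∀ u v : ι → Bool, u ≠ v → ∃ i, u i ≠ v i ∧ s u i ≠ s v i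

/-- `v` lies in the face containing `base` spanned by dimensions `I`. -/
def InFace {n : ℕ} (base : Fin n → Bool) (I : Finset (Fin n)) (v : Fin n → Bool) : Prop :=
  ∀ i ∉ I, v i = base i

instance {n : ℕ} (base : Fin n → Bool) (I : Finset (Fin n)) :
    DecidablePred (InFace base I) := fun _ => by unfold InFace; infer_instance

/-- The mixed case: `u` in the face, `v` outside. -/
lemma stmt7_aux (n : ℕ) (s : (Fin n → Bool) → (Fin n → Bool)) (hs : IsUSO s)
    (u₀ : Fin n → Bool) (I : Finset (Fin n))
    (hhyper : ∀ v w : Fin n → Bool, InFace u₀ I v → InFace u₀ I w →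
      ∀ i ∉ I, s v i = s w i)
    (u v : Fin n → Bool) (hu : InFace u₀ I u) (hv : ¬ InFace u₀ I v) :
    ∃ i, i ∉ I ∧ u i ≠ v i ∧ s u i ≠ s v i := by
  set u' : Fin n → Bool := fun i => if i ∈ I then v i else u₀ i with hu'
  have hu'F : InFace u₀ I u' := fun i hi => by simp [hu', hi]
  have hne : u' ≠ v := by
    intro h
    exact hv (fun i hi => by rw [← h]; simp [hu', hi])
  obtain ⟨i, hi1, hi2⟩ := hs u' v hne
  have hiI : i ∉ I := by
    intro hiI
    exact hi1 (by simp [hu', hiI])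
  refine ⟨i, hiI, ?_, ?_⟩
  · rw [hu i hiI]
    simpa [hu', hiI] using hi1
  · rw [hhyper u u' hu hu'F i hiI]
    exact hi2

/-- Hypervertex replacement: replacing the orientation inside a hypervertex
`C_{u₀}^I` by any USO (on the `I`-coordinates) preserves the USO property. -/
theorem stmt7 (n : ℕ) (s : (Fin n → Bool) → (Fin n → Bool)) (hs : IsUSO s)
    (u₀ : Fin n → Bool) (I : Finset (Fin n))
    (hhyper : ∀ v w : Fin n → Bool, InFace u₀ I v → InFace u₀ I w →
      ∀ i ∉ I, s v i = s w i)
    (s' : (Fin n → Bool) → (Fin n → Bool))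
    (hs' : ∀ v w : Fin n → Bool, InFace u₀ I v → InFace u₀ I w → v ≠ w →
      ∃ i ∈ I, v i ≠ w i ∧ s' v i ≠ s' w i) :
    IsUSO (fun v : Fin n → Bool => fun i =>
      if InFace u₀ I v then (if i ∈ I then s' v i else s v i) else s v i) := by
  intro u v huv
  by_cases hu : InFace u₀ I u <;> by_cases hv : InFace u₀ I v
  · obtain ⟨i, hiI, h1, h2⟩ := hs' u v hu hv huv
    exact ⟨i, h1, by simpa [hu, hv, hiI] using h2⟩
  · obtain ⟨i, hiI, h1, h2⟩ := stmt7_aux n s hs u₀ I hhyper u v hu hv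
    exact ⟨i, h1, by simpa [hu, hv, hiI] using h2⟩
  · obtain ⟨i, hiI, h1, h2⟩ := stmt7_aux n s hs u₀ I hhyper v u hv hu
    exact ⟨i, h1.symm, by simpa [hu, hv, hiI] using h2.symm⟩
  · obtain ⟨i, h1, h2⟩ := hs u v huv
    exact ⟨i, h1, by simpa [hu, hv] using h2⟩
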